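/- Define f_{m,k}(q) by (1-q)/((zq;q)_k (q/z;q)_k) = ∑_{m∈ℤ} z^m f_{m,k}(q). Then for every k ≥ 2, the constant coefficient of f_{0,k}(q) is 1, the coefficient of q^1 is at least −1, the coefficient of q^2 is at least 1, and all other coefficients are nonnegative. -/

import Mathlib

def akm (k : ℕ) (m : ℤ) (n : ℕ) : ℕ :=
  (Finset.univ.filter
    (fun p : (Fin k → Fin (n + 1)) × (Fin k → Fin (n + 1)) =>
      (∑ i : Fin k, (i.1 + 1) * (((p.1 i : ℕ)) + (p.2 i : ℕ)) = n) ∧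
      ((∑ i : Fin k, ((p.1 i : ℕ) : ℤ)) - ∑ i : Fin k, ((p.2 i : ℕ) : ℤ)) = m)).card

def fmk (k : ℕ) (m : ℤ) (n : ℕ) : ℤ :=
  (akm k m n : ℤ) - (if n = 0 then 0 else (akm k m (n - 1) : ℤ))

def geomCoeff (s a b n : ℕ) : ℤ :=
  if s ≤ n then
    (((Finset.range (n + 1) ×ˢ Finset.range (n + 1)).filter
      (fun p => a * p.1 + b * p.2 = n - s)).card : ℤ)
  else 0

namespace F0K

abbrev V (k : ℕ) := (Fin k → ℕ) × (Fin k → ℕ)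

def wt {k : ℕ} (p : V k) : ℕ := ∑ i : Fin k, (i.1 + 1) * (p.1 i + p.2 i)

def bal {k : ℕ} (p : V k) : ℤ := (∑ i : Fin k, (p.1 i : ℤ)) - ∑ i : Fin k, (p.2 i : ℤ)

def T (k : ℕ) (d : ℤ) (n : ℕ) : Finset (V k) :=
  ((Fintype.piFinset fun _ => Finset.range (n+1)) ×ˢ
    (Fintype.piFinset fun _ => Finset.range (n+1))).filter
    (fun p => wt p = n ∧ bal p = d)

lemma coord_le_wt {k : ℕ} (p : V k) (i : Fin k) :
    p.1 i ≤ wt p ∧ p.2 i ≤ wt p := by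
  have h : (i.1 + 1) * (p.1 i + p.2 i) ≤ wt p :=
    Finset.single_le_sum (f := fun i : Fin k => (i.1 + 1) * (p.1 i + p.2 i))
      (fun i _ => Nat.zero_le _) (Finset.mem_univ i)
  have h2 : p.1 i + p.2 i ≤ (i.1 + 1) * (p.1 i + p.2 i) :=
    Nat.le_mul_of_pos_left _ (by omega)
  omega

lemma mem_T {k : ℕ} {d : ℤ} {n : ℕ} {p : V k} :
    p ∈ T k d n ↔ wt p = n ∧ bal p = d := by
  unfold T
  simp only [Finset.mem_filter, Finset.mem_product, Fintype.mem_piFinset, Finset.mem_range]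
  constructor
  · exact fun h => h.2
  · intro h
    refine ⟨⟨fun i => ?_, fun i => ?_⟩, h⟩
    · have := (coord_le_wt p i).1; omega
    · have := (coord_le_wt p i).2; omega

lemma T_card_akm (k : ℕ) (d : ℤ) (n : ℕ) : (T k d n).card = akm k d n := by
  unfold akm
  refine (Finset.card_bij (fun a _ => ((fun i => (a.1 i : ℕ)), (fun i => (a.2 i : ℕ)))) ?_ ?_ ?_).symm
  · intro a ha
    simp only [Finset.mem_filter, Finset.mem_univ, true_and] at ha
    exact mem_T.mpr ⟨ha.1, ha.2⟩
  · intro a _ b _ h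
    have h1 := congrArg Prod.fst h
    have h2 := congrArg Prod.snd h
    simp only at h1 h2
    ext i
    · exact congrFun h1 i
    · exact congrFun h2 i
  · intro b hb
    rw [mem_T] at hb
    refine ⟨((fun i => ⟨b.1 i, by have := (coord_le_wt b i).1; omega⟩),
             (fun i => ⟨b.2 i, by have := (coord_le_wt b i).2; omega⟩)), ?_, rfl⟩
    simp only [Finset.mem_filter, Finset.mem_univ, true_and]
    exact ⟨hb.1, hb.2⟩

lemma wt_swap {k : ℕ} (p : V k) : wt (Prod.swap p) = wt p := by
  unfold wt
  apply Finset.sum_congr rfl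
  intro i _
  simp [Prod.swap]
  ring

lemma bal_swap {k : ℕ} (p : V k) : bal (Prod.swap p) = - bal p := by
  unfold bal
  simp [Prod.swap]

lemma T_symm (k : ℕ) (d : ℤ) (n : ℕ) : (T k d n).card = (T k (-d) n).card := by
  refine Finset.card_bij (fun a _ => Prod.swap a) ?_ ?_ ?_
  · intro a ha
    rw [mem_T] at ha ⊢
    rw [wt_swap, bal_swap, ha.2]
    exact ⟨ha.1, rfl⟩
  · intro a _ b _ h
    exact Prod.swap_injective h
  · intro b hb
    refine ⟨Prod.swap b, ?_, by simp⟩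
    rw [mem_T] at hb ⊢
    rw [wt_swap, bal_swap, hb.2]
    exact ⟨hb.1, by ring⟩

lemma wt_eq_len_add {k : ℕ} (p : V k) :
    wt p = (∑ i : Fin k, (p.1 i + p.2 i)) + ∑ i : Fin k, i.1 * (p.1 i + p.2 i) := by
  unfold wt
  rw [← Finset.sum_add_distrib]
  apply Finset.sum_congr rfl
  intro i _; ring

lemma len_even {k : ℕ} (p : V k) (h : bal p = 0) :
    ∑ i : Fin k, (p.1 i + p.2 i) = 2 * ∑ i : Fin k, p.1 i := by
  unfold bal at h
  have h1 : (∑ i : Fin k, (p.1 i : ℤ)) = ∑ i : Fin k, (p.2 i : ℤ) := by omega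
  have h2 : ((∑ i : Fin k, p.1 i : ℕ) : ℤ) = ((∑ i : Fin k, p.2 i : ℕ) : ℤ) := by
    push_cast; exact h1
  have h3 : (∑ i : Fin k, p.1 i) = ∑ i : Fin k, p.2 i := by exact_mod_cast h2
  rw [Finset.sum_add_distrib, h3]; ring

lemma T_zero (k : ℕ) : (T k 0 0).card = 1 := by
  rw [Finset.card_eq_one]
  refine ⟨((fun _ => 0), (fun _ => 0)), ?_⟩
  ext p
  rw [mem_T, Finset.mem_singleton]
  constructor
  · rintro ⟨h1, _⟩
    unfold wt at h1
    rw [Finset.sum_eq_zero_iff] at h1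
    have hz : ∀ i : Fin k, p.1 i = 0 ∧ p.2 i = 0 := by
      intro i
      have h := h1 i (Finset.mem_univ i)
      rcases Nat.mul_eq_zero.mp h with h' | h'
      · omega
      · constructor <;> omega
    ext i
    · exact (hz i).1
    · exact (hz i).2
  · rintro rfl
    constructor
    · unfold wt; simp
    · unfold bal; simp

lemma T_one (k : ℕ) : (T k 0 1).card = 0 := by
  rw [Finset.card_eq_zero]
  by_contra h
  obtain ⟨p, hp⟩ := Finset.nonempty_iff_ne_empty.mpr h
  rw [mem_T] at hp
  have h1 := wt_eq_len_add p
  have h2 := len_even p hp.2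
  rw [hp.1, h2] at h1
  -- 1 = 2 * S + junk, so S = 0 and junk = 1
  have hS : ∑ i : Fin k, p.1 i = 0 := by omega
  have hjunk : ∑ i : Fin k, i.1 * (p.1 i + p.2 i) = 1 := by omega
  have hlen : ∑ i : Fin k, (p.1 i + p.2 i) = 0 := by omega
  rw [Finset.sum_eq_zero_iff] at hlen
  have : ∑ i : Fin k, i.1 * (p.1 i + p.2 i) = 0 := by
    apply Finset.sum_eq_zero
    intro i hi
    rw [hlen i hi, Nat.mul_zero]
  omega

lemma T_two (k : ℕ) (hk : 2 ≤ k) : (T k 0 2).card = 1 := by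
  have hk0 : 0 < k := by omega
  rw [Finset.card_eq_one]
  refine ⟨((fun i => if i.1 = 0 then 1 else 0), (fun i => if i.1 = 0 then 1 else 0)), ?_⟩
  ext p
  rw [mem_T, Finset.mem_singleton]
  constructor
  · rintro ⟨h1, h2⟩
    have ha := wt_eq_len_add p
    have hb := len_even p h2
    rw [h1, hb] at ha
    have hS : (∑ i : Fin k, p.1 i) ≤ 1 := by omega
    -- junk is 2 - 2S, if S = 0 all zero contradiction
    have hScases : (∑ i : Fin k, p.1 i) = 1 := by
      rcases Nat.lt_or_ge (∑ i : Fin k, p.1 i) 1 with h | h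
      · exfalso
        have hS0 : ∑ i : Fin k, p.1 i = 0 := by omega
        have hlen : ∑ i : Fin k, (p.1 i + p.2 i) = 0 := by omega
        rw [Finset.sum_eq_zero_iff] at hlen
        have : wt p = 0 := by
          apply Finset.sum_eq_zero
          intro i hi
          rw [hlen i hi, Nat.mul_zero]
        omega
      · omega
    have hjunk : ∑ i : Fin k, i.1 * (p.1 i + p.2 i) = 0 := by omega
    rw [Finset.sum_eq_zero_iff] at hjunk
    -- so p supported at 0 only
    have hsupp : ∀ i : Fin k, i.1 ≠ 0 → p.1 i = 0 ∧ p.2 i = 0 := by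
      intro i hi
      have h := hjunk i (Finset.mem_univ i)
      rcases Nat.mul_eq_zero.mp h with h' | h'
      · omega
      · constructor <;> omega
    -- sum p.1 = 1 and sum p.2 = 1, all at index 0
    have hsum2 : (∑ i : Fin k, p.2 i) = 1 := by
      have := len_even p h2
      rw [Finset.sum_add_distrib] at this
      omega
    have key : ∀ (f : Fin k → ℕ), (∀ i : Fin k, i.1 ≠ 0 → f i = 0) →
        (∑ i : Fin k, f i) = 1 → ∀ i : Fin k, f i = if i.1 = 0 then 1 else 0 := by
      intro f hf hsum i
      have h0 : (∑ i : Fin k, f i) = f ⟨0, hk0⟩ := by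
        apply Finset.sum_eq_single
        · intro b _ hb
          apply hf
          intro hb0
          exact hb (Fin.ext hb0)
        · intro h; exact absurd (Finset.mem_univ _) h
      by_cases hi : i.1 = 0
      · have : i = ⟨0, hk0⟩ := Fin.ext hi
        rw [this, if_pos rfl] at *
        omega
      · rw [if_neg hi]
        exact hf i hi
    ext i
    · exact key p.1 (fun i hi => (hsupp i hi).1) (by omega) i
    · exact key p.2 (fun i hi => (hsupp i hi).2) hsum2 i
  · rintro rfl
    have hsum : ∀ c : ℕ, (∑ i : Fin k, (if i.1 = 0 then c else 0)) = c := by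
      intro c
      rw [Finset.sum_eq_single ⟨0, hk0⟩]
      · simp
      · intro b _ hb
        rw [if_neg]
        intro hb0; exact hb (Fin.ext hb0)
      · intro h; exact absurd (Finset.mem_univ _) h
    constructor
    · unfold wt
      rw [Finset.sum_congr rfl (g := fun i : Fin k => if i.1 = 0 then 2 else 0)]
      · exact hsum 2
      · intro i _
        by_cases hi : i.1 = 0 <;> simp [hi]
    · unfold bal
      simp

lemma wt_split {k : ℕ} (p : V (k+1)) :
    wt p = (wt ((fun j : Fin k => p.1 j.castSucc), (fun j : Fin k => p.2 j.castSucc)))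
      + (k+1) * (p.1 (Fin.last k) + p.2 (Fin.last k)) := by
  unfold wt
  rw [Fin.sum_univ_castSucc (f := fun i : Fin (k+1) => (i.1 + 1) * (p.1 i + p.2 i))]
  rfl

lemma bal_split {k : ℕ} (p : V (k+1)) :
    bal p = (bal ((fun j : Fin k => p.1 j.castSucc), (fun j : Fin k => p.2 j.castSucc)))
      + (p.1 (Fin.last k) : ℤ) - (p.2 (Fin.last k) : ℤ) := by
  unfold bal
  rw [Fin.sum_univ_castSucc (f := fun i : Fin (k+1) => (p.1 i : ℤ)),
      Fin.sum_univ_castSucc (f := fun i : Fin (k+1) => (p.2 i : ℤ))]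
  push_cast
  ring

lemma strip_nat (k : ℕ) (d : ℤ) (n : ℕ) :
    (T (k+1) d n).card =
      ∑ rs ∈ Finset.range (n+1) ×ˢ Finset.range (n+1),
        (if (k+1)*(rs.1+rs.2) ≤ n
          then (T k (d - rs.1 + rs.2) (n - (k+1)*(rs.1+rs.2))).card else 0) := by
  rw [Finset.card_eq_sum_card_fiberwise
    (f := fun p : V (k+1) => (p.1 (Fin.last k), p.2 (Fin.last k)))
    (t := Finset.range (n+1) ×ˢ Finset.range (n+1)) ?_]
  · apply Finset.sum_congr rfl
    rintro ⟨r, s⟩ hrs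
    simp only [Finset.mem_product, Finset.mem_range] at hrs
    dsimp only
    by_cases h : (k+1)*(r+s) ≤ n
    · rw [if_pos h]
      refine Finset.card_bij'
        (fun p _ => ((fun j : Fin k => p.1 j.castSucc), (fun j : Fin k => p.2 j.castSucc)))
        (fun q _ => (Fin.snoc q.1 r, Fin.snoc q.2 s)) ?_ ?_ ?_ ?_
      · intro p hp
        simp only [Finset.mem_filter] at hp
        obtain ⟨hpT, hf⟩ := hp
        rw [mem_T] at hpT ⊢
        have hr : p.1 (Fin.last k) = r := congrArg Prod.fst hf
        have hs : p.2 (Fin.last k) = s := congrArg Prod.snd hf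
        have h1 := wt_split p
        have h2 := bal_split p
        rw [hr, hs] at h1 h2
        constructor
        · have := hpT.1; omega
        · have := hpT.2; omega
      · intro q hq
        rw [mem_T] at hq
        simp only [Finset.mem_filter]
        have hw : wt ((Fin.snoc q.1 r : Fin (k+1) → ℕ), (Fin.snoc q.2 s : Fin (k+1) → ℕ))
            = wt q + (k+1)*(r+s) := by
          rw [wt_split]
          simp only [Fin.snoc_last, Fin.snoc_castSucc]
          try rfl
        have hbq : bal ((Fin.snoc q.1 r : Fin (k+1) → ℕ), (Fin.snoc q.2 s : Fin (k+1) → ℕ))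
            = bal q + r - s := by
          rw [bal_split]
          simp only [Fin.snoc_last, Fin.snoc_castSucc]
          try rfl
        refine ⟨mem_T.mpr ⟨?_, ?_⟩, ?_⟩
        · rw [hw, hq.1]; omega
        · rw [hbq, hq.2]; ring
        · simp only [Fin.snoc_last]
      · intro p hp
        simp only [Finset.mem_filter] at hp
        have hr : p.1 (Fin.last k) = r := congrArg Prod.fst hp.2
        have hs : p.2 (Fin.last k) = s := congrArg Prod.snd hp.2
        dsimp only
        rw [← hr, ← hs]
        ext i
        · exact congrFun (Fin.snoc_init_self p.1) i
        · exact congrFun (Fin.snoc_init_self p.2) i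
      · intro q hq
        dsimp only
        ext j
        · simp [Fin.snoc_castSucc]
        · simp [Fin.snoc_castSucc]
    · rw [if_neg h]
      rw [Finset.card_eq_zero, Finset.filter_eq_empty_iff]
      intro p hp
      rw [mem_T] at hp
      intro hf
      have hr : p.1 (Fin.last k) = r := congrArg Prod.fst hf
      have hs : p.2 (Fin.last k) = s := congrArg Prod.snd hf
      have h1 := wt_split p
      rw [hr, hs, hp.1] at h1
      omega
  · intro p hp
    rw [Finset.mem_coe, mem_T] at hp
    simp only [Finset.mem_coe, Finset.mem_product, Finset.mem_range]
    have h1 := (coord_le_wt p (Fin.last k)).1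
    have h2 := (coord_le_wt p (Fin.last k)).2
    rw [hp.1] at h1 h2
    omega

/-- strip the top part (size k+1) -/
lemma strip (k : ℕ) (d : ℤ) (n : ℕ) :
    ((T (k+1) d n).card : ℤ) =
      ∑ rs ∈ Finset.range (n+1) ×ˢ Finset.range (n+1),
        (if (k+1)*(rs.1+rs.2) ≤ n
          then ((T k (d - rs.1 + rs.2) (n - (k+1)*(rs.1+rs.2))).card : ℤ) else 0) := by
  rw [strip_nat k d n]
  push_cast
  apply Finset.sum_congr rfl
  intro rs _
  split <;> simp

lemma mem_T2 {d : ℤ} {n : ℕ} {p : V 2} :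
    p ∈ T 2 d n ↔ (p.1 0 + p.2 0) + 2*(p.1 1 + p.2 1) = n ∧
      (p.1 0 : ℤ) + (p.1 1 : ℤ) - (p.2 0 : ℤ) - (p.2 1 : ℤ) = d := by
  rw [mem_T]
  unfold wt bal
  rw [Fin.sum_univ_two, Fin.sum_univ_two, Fin.sum_univ_two]
  simp only [Fin.val_zero, Fin.val_one]
  constructor
  · rintro ⟨h1, h2⟩
    constructor
    · omega
    · omega
  · rintro ⟨h1, h2⟩
    constructor
    · omega
    · omega

/-- the injection for k = 2, in the case d = δ ≥ 0 -/
def f2 (δ n : ℕ) (p : V 2) : V 2 :=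
  if p.1 0 = 0 then
    ((fun i : Fin 2 => if i = 0 then ((n+3-δ)/3 + (n-2*δ)/3 - (p.2 0 + p.2 1)) + δ else 0),
     (fun i : Fin 2 => if i = 0 then
        (((n+3-δ)/3 + (n-2*δ)/3 - (p.2 0 + p.2 1))
          - ((n+1-δ) - 2*((n+3-δ)/3 + (n-2*δ)/3 - (p.2 0 + p.2 1))))
      else ((n+1-δ) - 2*((n+3-δ)/3 + (n-2*δ)/3 - (p.2 0 + p.2 1)))))
  else
    ((fun i : Fin 2 => if i = 0 then p.1 0 - 1 else p.1 1 + 1), p.2)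

lemma P2aux (δ n : ℕ) (h : ¬(δ = 0 ∧ n = 0)) :
    (T 2 (δ : ℤ) n).card ≤ (T 2 (δ : ℤ) (n+1)).card := by
  apply Finset.card_le_card_of_injOn (f2 δ n)
  · -- maps into
    intro p hp
    rw [Finset.mem_coe, mem_T2] at hp
    obtain ⟨hw, hb⟩ := hp
    by_cases hp0 : p.1 0 = 0
    · -- case 3
      set t := p.2 0 + p.2 1 with ht
      set t' := (n+3-δ)/3 + (n-2*δ)/3 - t with ht'
      set B' := (n+1-δ) - 2*t' with hB'
      have ha1 : p.1 1 = t + δ := by omega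
      have hb1 : p.2 1 = n - 3*t - 2*δ ∧ 3*t + 2*δ ≤ n := by omega
      have he4 : n - 2*δ ≤ 4*t := by omega
      have hM2 : 2 ≤ n + 1 - δ := by omega
      have htle : t ≤ (n+3-δ)/3 + (n-2*δ)/3 := by omega
      have ht'lb : n + 1 - δ ≤ 3 * t' := by omega
      have ht'ub : 2 * t' ≤ n + 1 - δ := by omega
      rw [Finset.mem_coe, mem_T2]
      simp only [f2, if_pos hp0]
      simp only [show ((0:Fin 2) = 0) = True by simp, show ((1:Fin 2) = 0) = False by decide,
        if_true, if_false]
      constructor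
      · omega
      · omega
    · -- case 1
      rw [Finset.mem_coe, mem_T2]
      simp only [f2, if_neg hp0]
      simp only [show ((0:Fin 2) = 0) = True by simp, show ((1:Fin 2) = 0) = False by decide,
        if_true, if_false]
      constructor
      · omega
      · omega
  · -- injective
    intro p hp q hq hfeq
    simp only [Finset.mem_coe] at hp hq
    rw [mem_T2] at hp hq
    obtain ⟨hwp, hbp⟩ := hp
    obtain ⟨hwq, hbq⟩ := hq
    have e10 := congrFun (congrArg Prod.fst hfeq) 0
    have e11 := congrFun (congrArg Prod.fst hfeq) 1
    have e20 := congrFun (congrArg Prod.snd hfeq) 0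
    have e21 := congrFun (congrArg Prod.snd hfeq) 1
    by_cases hp0 : p.1 0 = 0 <;> by_cases hq0 : q.1 0 = 0
    · -- both case 3
      simp only [f2, if_pos hp0, if_pos hq0] at e10 e11 e20 e21
      simp only [show ((0:Fin 2) = 0) = True by simp, show ((1:Fin 2) = 0) = False by decide,
        if_true, if_false] at e10 e11 e20 e21
      have ht : p.2 0 + p.2 1 = q.2 0 + q.2 1 := by
        have hap : p.1 1 = (p.2 0 + p.2 1) + δ := by omega
        have haq : q.1 1 = (q.2 0 + q.2 1) + δ := by omega
        have htlep : p.2 0 + p.2 1 ≤ (n+3-δ)/3 + (n-2*δ)/3 := by omega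
        have htleq : q.2 0 + q.2 1 ≤ (n+3-δ)/3 + (n-2*δ)/3 := by omega
        omega
      have hb1 : p.2 1 = q.2 1 := by omega
      ext i
      · fin_cases i <;> simp_all <;> omega
      · fin_cases i <;> simp_all <;> omega
    · -- p case3, q case1 : impossible
      exfalso
      simp only [f2, if_pos hp0, if_neg hq0] at e11
      simp only [show ((1:Fin 2) = 0) = False by decide, if_false] at e11
      omega
    · exfalso
      simp only [f2, if_neg hp0, if_pos hq0] at e11
      simp only [show ((1:Fin 2) = 0) = False by decide, if_false] at e11
      omega
    · -- both case 1
      simp only [f2, if_neg hp0, if_neg hq0] at e10 e11 e20 e21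
      simp only [show ((0:Fin 2) = 0) = True by simp, show ((1:Fin 2) = 0) = False by decide,
        if_true, if_false] at e10 e11 e20 e21
      ext i
      · fin_cases i <;> simp_all <;> omega
      · fin_cases i <;> simp_all <;> omega

/-- base case of the master induction: k = 2 -/
lemma P2 (d : ℤ) (n : ℕ) (h : ¬(d = 0 ∧ n = 0)) :
    (T 2 d n).card ≤ (T 2 d (n+1)).card := by
  rcases le_or_gt 0 d with hd | hd
  · obtain ⟨δ, rfl⟩ := Int.eq_ofNat_of_zero_le hd
    exact P2aux δ n (by simpa using h)
  · rw [T_symm 2 d n, T_symm 2 d (n+1)]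
    obtain ⟨δ, hδ⟩ : ∃ δ : ℕ, -d = (δ : ℤ) := ⟨(-d).toNat, by omega⟩
    rw [hδ]
    exact P2aux δ n (by omega)

def wA {k : ℕ} (f : Fin k → ℕ) : ℕ := ∑ i : Fin k, (i.1+1) * f i
def sA {k : ℕ} (f : Fin k → ℕ) : ℕ := ∑ i : Fin k, f i

lemma wt_eq_wA {k : ℕ} (p : V k) : wt p = wA p.1 + wA p.2 := by
  unfold wt wA
  rw [← Finset.sum_add_distrib]
  apply Finset.sum_congr rfl
  intro i _; ring

lemma bal_eq_sA {k : ℕ} (p : V k) : bal p = (sA p.1 : ℤ) - (sA p.2 : ℤ) := by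
  unfold bal sA
  push_cast
  ring

lemma wA_eq_sA_add {k : ℕ} (f : Fin k → ℕ) : wA f = sA f + ∑ i : Fin k, i.1 * f i := by
  unfold wA sA
  rw [← Finset.sum_add_distrib]
  apply Finset.sum_congr rfl
  intro i _; ring

lemma wA_update {k : ℕ} (f : Fin k → ℕ) (a : Fin k) (v : ℕ) :
    wA (Function.update f a v) + (a.1+1) * f a = wA f + (a.1+1) * v := by
  unfold wA
  rw [← Finset.sum_erase_add _ _ (Finset.mem_univ a),
      ← Finset.sum_erase_add _ (fun i : Fin k => (i.1+1) * f i) (Finset.mem_univ a)]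
  have hcong : ∑ i ∈ Finset.univ.erase a, (i.1+1) * (Function.update f a v i)
      = ∑ i ∈ Finset.univ.erase a, (i.1+1) * f i := by
    apply Finset.sum_congr rfl
    intro i hi
    rw [Function.update_apply, if_neg (Finset.mem_erase.mp hi).1]
  rw [hcong, Function.update_self]
  ring

lemma sA_update {k : ℕ} (f : Fin k → ℕ) (a : Fin k) (v : ℕ) :
    sA (Function.update f a v) + f a = sA f + v := by
  unfold sA
  rw [← Finset.sum_erase_add _ _ (Finset.mem_univ a),
      ← Finset.sum_erase_add _ f (Finset.mem_univ a)]
  have hcong : ∑ i ∈ Finset.univ.erase a, (Function.update f a v i)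
      = ∑ i ∈ Finset.univ.erase a, f i := by
    apply Finset.sum_congr rfl
    intro i hi
    rw [Function.update_apply, if_neg (Finset.mem_erase.mp hi).1]
  rw [hcong, Function.update_self]
  ring

lemma wA_single {k : ℕ} (hk : 0 < k) (j₀ : ℕ) (hj : j₀ < k) (v : ℕ) :
    wA (fun i : Fin k => if i.1 = j₀ then v else 0) = (j₀+1)*v := by
  unfold wA
  rw [Finset.sum_eq_single ⟨j₀, hj⟩]
  · simp
  · intro b _ hb
    dsimp only
    rw [if_neg, Nat.mul_zero]
    intro hb0; exact hb (Fin.ext hb0)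
  · intro h; exact absurd (Finset.mem_univ _) h

lemma sA_single {k : ℕ} (hk : 0 < k) (j₀ : ℕ) (hj : j₀ < k) (v : ℕ) :
    sA (fun i : Fin k => if i.1 = j₀ then v else 0) = v := by
  unfold sA
  rw [Finset.sum_eq_single ⟨j₀, hj⟩]
  · simp
  · intro b _ hb
    rw [if_neg]
    intro hb0; exact hb (Fin.ext hb0)
  · intro h; exact absurd (Finset.mem_univ _) h

/-- index of the largest nonzero entry (or 0) -/
def bumpIdx {k : ℕ} (hk : 0 < k) (f : Fin k → ℕ) : Fin k :=
  WithBot.unbotD ⟨0, hk⟩ ((Finset.univ.filter (fun i => f i ≠ 0)).max)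

def nextIdx {k : ℕ} (hk : 0 < k) (j : Fin k) : Fin k :=
  ⟨min (j.1+1) (k-1), by omega⟩

lemma bumpIdx_spec {k : ℕ} (hk : 0 < k) (f : Fin k → ℕ)
    (hne : ∃ i, f i ≠ 0) :
    f (bumpIdx hk f) ≠ 0 ∧ ∀ i : Fin k, f i ≠ 0 → i ≤ bumpIdx hk f := by
  obtain ⟨i0, hi0⟩ := hne
  have hfilter : (Finset.univ.filter (fun i => f i ≠ 0)).Nonempty :=
    ⟨i0, Finset.mem_filter.mpr ⟨Finset.mem_univ _, hi0⟩⟩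
  have hmax : (Finset.univ.filter (fun i => f i ≠ 0)).max
      = ↑((Finset.univ.filter (fun i => f i ≠ 0)).max' hfilter) :=
    (Finset.coe_max' hfilter).symm
  have hbi : bumpIdx hk f = (Finset.univ.filter (fun i => f i ≠ 0)).max' hfilter := by
    unfold bumpIdx
    rw [hmax]
    rfl
  constructor
  · rw [hbi]
    exact (Finset.mem_filter.mp (Finset.max'_mem _ hfilter)).2
  · intro i hi
    rw [hbi]
    exact Finset.le_max' _ i (Finset.mem_filter.mpr ⟨Finset.mem_univ _, hi⟩)

/-- the bump map -/
def bump {k : ℕ} (hk : 0 < k) (p : V k) : V k :=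
  (Function.update (Function.update p.1 (bumpIdx hk p.1) (p.1 (bumpIdx hk p.1) - 1))
    (nextIdx hk (bumpIdx hk p.1)) (p.1 (nextIdx hk (bumpIdx hk p.1)) + 1), p.2)

/-- key structure facts for elements of `T k 1 (k+1)` -/
lemma T_top_facts {k : ℕ} (hk : 2 ≤ k) {p : V k} (hp : p ∈ T k 1 (k+1)) :
    p.1 (bumpIdx (by omega) p.1) ≠ 0 ∧
    (∀ i : Fin k, p.1 i ≠ 0 → i ≤ bumpIdx (by omega : 0 < k) p.1) ∧
    (bumpIdx (by omega : 0 < k) p.1).1 + 1 < k := by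
  have hk0 : 0 < k := by omega
  rw [mem_T] at hp
  have hSα : 1 ≤ sA p.1 := by
    have := bal_eq_sA p
    rw [hp.2] at this
    omega
  have hex : ∃ i, p.1 i ≠ 0 := by
    by_contra hcon
    push_neg at hcon
    have : sA p.1 = 0 := Finset.sum_eq_zero (fun i _ => hcon i)
    omega
  obtain ⟨hjne, hjtop⟩ := bumpIdx_spec hk0 p.1 hex
  set j := bumpIdx hk0 p.1 with hjdef
  refine ⟨hjne, hjtop, ?_⟩
  by_contra hcon
  have hjval : j.1 = k - 1 := by have := j.2; omega
  have hbal : sA p.1 = sA p.2 + 1 := by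
    have := bal_eq_sA p
    rw [hp.2] at this
    omega
  have hwt := wt_eq_wA p
  rw [hp.1] at hwt
  have hα : wA p.1 = sA p.1 + ∑ i : Fin k, i.1 * p.1 i := wA_eq_sA_add p.1
  have hβ : sA p.2 ≤ wA p.2 := by
    rw [wA_eq_sA_add p.2]; omega
  have hsingle : j.1 * p.1 j ≤ ∑ i : Fin k, i.1 * p.1 i :=
    Finset.single_le_sum (f := fun i : Fin k => i.1 * p.1 i)
      (fun i _ => Nat.zero_le _) (Finset.mem_univ j)
  have hαj1 : p.1 j = 1 ∧ sA p.2 = 0 ∧ sA p.1 = 1 := by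
    have hh : p.1 j ≤ sA p.1 :=
      Finset.single_le_sum (f := fun i : Fin k => p.1 i)
        (fun i _ => Nat.zero_le _) (Finset.mem_univ j)
    have h1 : 1 ≤ p.1 j := Nat.one_le_iff_ne_zero.mpr hjne
    constructor
    · nlinarith
    constructor
    · nlinarith
    · nlinarith
  have hother : ∀ i : Fin k, i ≠ j → p.1 i = 0 := by
    intro i hij
    have hsplit := Finset.sum_erase_add Finset.univ p.1 (Finset.mem_univ j)
    have h1 := hαj1.1
    have h2 : (∑ i : Fin k, p.1 i) = 1 := hαj1.2.2
    have hz : ∑ i ∈ Finset.univ.erase j, p.1 i = 0 := by omega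
    rw [Finset.sum_eq_zero_iff] at hz
    exact hz i (Finset.mem_erase.mpr ⟨hij, Finset.mem_univ i⟩)
  have hβ0 : ∀ i : Fin k, p.2 i = 0 := by
    intro i
    have h2 : (∑ i : Fin k, p.2 i) = 0 := hαj1.2.1
    rw [Finset.sum_eq_zero_iff] at h2
    exact h2 i (Finset.mem_univ i)
  have hwtp : wt p = j.1 + 1 := by
    unfold wt
    rw [Finset.sum_eq_single j]
    · rw [hβ0 j, hαj1.1]; ring
    · intro b _ hb
      rw [hother b hb, hβ0 b]
      simp
    · intro h; exact absurd (Finset.mem_univ _) h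
  rw [hp.1] at hwtp
  omega

/-- the top support index of the bumped vector -/
lemma bumpIdx_bump {k : ℕ} (hk0 : 0 < k) (f : Fin k → ℕ) (j : Fin k)
    (hjlt : j.1 + 1 < k) (hjne : f j ≠ 0) (hjtop : ∀ i, f i ≠ 0 → i ≤ j) :
    bumpIdx hk0 (Function.update (Function.update f j (f j - 1))
      (nextIdx hk0 j) (f (nextIdx hk0 j) + 1)) = nextIdx hk0 j := by
  set j' := nextIdx hk0 j with hj'def
  have hj'val : j'.1 = j.1 + 1 := by
    rw [hj'def]; unfold nextIdx; simp; omega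
  have hjj' : j ≠ j' := by intro hcon; have := congrArg Fin.val hcon; omega
  set g := Function.update (Function.update f j (f j - 1)) j' (f j' + 1) with hg
  have hgj' : g j' ≠ 0 := by
    rw [hg, Function.update_self]; omega
  have hgtop : ∀ i, g i ≠ 0 → i ≤ j' := by
    intro i hi
    by_cases hij' : i = j'
    · exact le_of_eq hij'
    · by_cases hij : i = j
      · subst hij; exact Fin.le_def.mpr (by omega)
      · rw [hg, Function.update_apply, if_neg hij', Function.update_apply, if_neg hij] at hi
        have := hjtop i hi
        exact le_trans this (Fin.le_def.mpr (by omega))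
  obtain ⟨h1, h2⟩ := bumpIdx_spec hk0 g ⟨j', hgj'⟩
  exact le_antisymm (hgtop _ h1) (h2 j' hgj')

/-- the strict gain lemma -/
lemma Qlem (k : ℕ) (hk : 2 ≤ k) : (T k 1 (k+1)).card + 1 ≤ (T k 1 (k+2)).card := by
  have hk0 : 0 < k := by omega
  classical
  set xs : V k := ((fun i : Fin k => if i.1 = 0 then 2 else 0),
                   (fun i : Fin k => if i.1 = k-1 then 1 else 0)) with hxs
  have hxsmem : xs ∈ T k 1 (k+2) := by
    rw [mem_T]
    constructor
    · rw [wt_eq_wA]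
      show wA (fun i : Fin k => if i.1 = 0 then 2 else 0)
          + wA (fun i : Fin k => if i.1 = k-1 then 1 else 0) = k+2
      rw [wA_single hk0 0 (by omega) 2, wA_single hk0 (k-1) (by omega) 1]
      omega
    · rw [bal_eq_sA]
      show (sA (fun i : Fin k => if i.1 = 0 then 2 else 0) : ℤ)
          - (sA (fun i : Fin k => if i.1 = k-1 then 1 else 0) : ℤ) = 1
      rw [sA_single hk0 0 (by omega) 2, sA_single hk0 (k-1) (by omega) 1]
      norm_num
  have hinj : (T k 1 (k+1)).card ≤ ((T k 1 (k+2)).erase xs).card := by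
    apply Finset.card_le_card_of_injOn (bump hk0)
    · -- maps into erase
      intro p hp
      obtain ⟨hjne, hjtop, hjlt⟩ := T_top_facts hk hp
      rw [Finset.mem_coe, mem_T] at hp
      set j := bumpIdx hk0 p.1 with hjdef
      set j' := nextIdx hk0 j with hj'def
      have hj'val : j'.1 = j.1 + 1 := by
        rw [hj'def]; unfold nextIdx; simp; omega
      have hjj' : j ≠ j' := by intro hcon; have := congrArg Fin.val hcon; omega
      have hup1 : (Function.update p.1 j (p.1 j - 1)) j' = p.1 j' := by
        rw [Function.update_apply, if_neg (Ne.symm hjj')]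
      have hpj1 : 1 ≤ p.1 j := Nat.one_le_iff_ne_zero.mpr hjne
      rw [Finset.mem_coe, Finset.mem_erase]
      constructor
      · -- image ≠ xs
        intro hcon
        have hval := congrFun (congrArg Prod.fst hcon) j'
        unfold bump at hval
        rw [← hjdef, ← hj'def] at hval
        dsimp only at hval
        rw [Function.update_self] at hval
        simp only [hxs] at hval
        rw [if_neg (show ¬ (j'.1 = 0) by omega)] at hval
        omega
      · rw [mem_T]
        unfold bump
        rw [← hjdef, ← hj'def]
        constructor
        · rw [wt_eq_wA]
          dsimp only
          have e1 := wA_update p.1 j (p.1 j - 1)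
          have e2 := wA_update (Function.update p.1 j (p.1 j - 1)) j' (p.1 j' + 1)
          rw [hup1] at e2
          have hr1 : (j.1+1) * (p.1 j - 1) + (j.1+1) = (j.1+1) * (p.1 j) := by
            obtain ⟨c, hc⟩ : ∃ c, p.1 j = c + 1 := ⟨p.1 j - 1, by omega⟩
            rw [hc, Nat.add_sub_cancel]
            ring
          have hr2 : (j'.1+1) * (p.1 j' + 1) = (j'.1+1) * (p.1 j') + (j'.1+1) := by ring
          have hwtp := wt_eq_wA p
          rw [hp.1] at hwtp
          omega
        · rw [bal_eq_sA]
          dsimp only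
          have e1 := sA_update p.1 j (p.1 j - 1)
          have e2 := sA_update (Function.update p.1 j (p.1 j - 1)) j' (p.1 j' + 1)
          rw [hup1] at e2
          have hbalp := bal_eq_sA p
          rw [hp.2] at hbalp
          omega
    · -- injectivity
      intro p hp q hq heq
      simp only [Finset.mem_coe] at hp hq
      obtain ⟨hpne, hptop, hplt⟩ := T_top_facts hk hp
      obtain ⟨hqne, hqtop, hqlt⟩ := T_top_facts hk hq
      set jp := bumpIdx hk0 p.1 with hjpdef
      set jq := bumpIdx hk0 q.1 with hjqdef
      have hβ' := congrArg Prod.snd heq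
      have hβ : p.2 = q.2 := hβ'
      have hα' := congrArg Prod.fst heq
      have hα : (Function.update (Function.update p.1 jp (p.1 jp - 1))
            (nextIdx hk0 jp) (p.1 (nextIdx hk0 jp) + 1))
          = (Function.update (Function.update q.1 jq (q.1 jq - 1))
            (nextIdx hk0 jq) (q.1 (nextIdx hk0 jq) + 1)) := hα'
      have htopp := bumpIdx_bump hk0 p.1 jp hplt hpne hptop
      have htopq := bumpIdx_bump hk0 q.1 jq hqlt hqne hqtop
      have hj'eq : nextIdx hk0 jp = nextIdx hk0 jq := by
        rw [← htopp, ← htopq, hα]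
      have hjp'val : (nextIdx hk0 jp).1 = jp.1 + 1 := by unfold nextIdx; simp; omega
      have hjq'val : (nextIdx hk0 jq).1 = jq.1 + 1 := by unfold nextIdx; simp; omega
      have hjeq : jp = jq := by
        have := congrArg Fin.val hj'eq
        exact Fin.ext (by omega)
      rw [← hjeq] at hα hqne
      have hjj' : jp ≠ nextIdx hk0 jp := by
        intro hcon; have := congrArg Fin.val hcon; omega
      have hα1 : p.1 = q.1 := by
        funext i
        have hi := congrFun hα i
        by_cases hij' : i = nextIdx hk0 jp
        · subst hij'
          rw [Function.update_self, Function.update_self] at hi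
          omega
        · simp only [Function.update_apply, if_neg hij'] at hi
          by_cases hij : i = jp
          · subst hij
            simp only [if_pos rfl, if_true] at hi
            have h1 : 1 ≤ p.1 jp := Nat.one_le_iff_ne_zero.mpr hpne
            have h2 : 1 ≤ q.1 jp := Nat.one_le_iff_ne_zero.mpr hqne
            omega
          · simp only [if_neg hij] at hi
            exact hi
      exact Prod.ext hα1 hβ
  have := Finset.card_erase_of_mem hxsmem
  have hpos : 1 ≤ (T k 1 (k+2)).card := Finset.card_pos.mpr ⟨xs, hxsmem⟩
  omega

/-- master monotonicity -/
lemma Pmain (k : ℕ) (hk : 2 ≤ k) : ∀ (d : ℤ) (n : ℕ), ¬(d = 0 ∧ n = 0) →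
    (T k d n).card ≤ (T k d (n+1)).card := by
  induction k, hk using Nat.le_induction with
  | base => exact P2
  | succ K hK ih =>
    intro d n h
    have s1 := strip K d (n+1)
    have s0 := strip K d n
    -- pad the level-n sum to the larger index set
    have hpad : ∑ rs ∈ Finset.range (n+1+1) ×ˢ Finset.range (n+1+1),
          (if (K+1)*(rs.1+rs.2) ≤ n
            then ((T K (d - rs.1 + rs.2) (n - (K+1)*(rs.1+rs.2))).card : ℤ) else 0)
        = ∑ rs ∈ Finset.range (n+1) ×ˢ Finset.range (n+1),
          (if (K+1)*(rs.1+rs.2) ≤ n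
            then ((T K (d - rs.1 + rs.2) (n - (K+1)*(rs.1+rs.2))).card : ℤ) else 0) := by
      symm
      apply Finset.sum_subset
      · apply Finset.product_subset_product <;>
          exact Finset.range_subset_range.mpr (by omega)
      · intro x hx hnx
        rw [if_neg]
        simp only [Finset.mem_product, Finset.mem_range] at hx hnx
        have : n + 1 ≤ x.1 ∨ n + 1 ≤ x.2 := by omega
        intro hcon
        rcases this with h' | h' <;> nlinarith
    -- per-term lower bound away from the bad pair
    have hterm : ∀ rs : ℕ × ℕ, ¬((d - rs.1 + rs.2 = 0) ∧ ((K+1)*(rs.1+rs.2) = n)) →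
        (0:ℤ) ≤ (if (K+1)*(rs.1+rs.2) ≤ n+1
            then ((T K (d - rs.1 + rs.2) ((n+1) - (K+1)*(rs.1+rs.2))).card : ℤ) else 0)
          - (if (K+1)*(rs.1+rs.2) ≤ n
            then ((T K (d - rs.1 + rs.2) (n - (K+1)*(rs.1+rs.2))).card : ℤ) else 0) := by
      intro rs hnb
      by_cases hg0 : (K+1)*(rs.1+rs.2) ≤ n
      · rw [if_pos hg0, if_pos (by omega)]
        rw [show (n+1) - (K+1)*(rs.1+rs.2) = (n - (K+1)*(rs.1+rs.2)) + 1 by omega]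
        have hnz : ¬(d - rs.1 + rs.2 = 0 ∧ n - (K+1)*(rs.1+rs.2) = 0) := by
          rintro ⟨h1, h2⟩
          exact hnb ⟨h1, by omega⟩
        have := ih (d - rs.1 + rs.2) (n - (K+1)*(rs.1+rs.2)) hnz
        omega
      · rw [if_neg hg0]
        by_cases hg1 : (K+1)*(rs.1+rs.2) ≤ n+1
        · rw [if_pos hg1]
          simp
        · rw [if_neg hg1]
          simp
    -- main estimate
    have hsum : (0:ℤ) ≤ ∑ rs ∈ Finset.range (n+1+1) ×ˢ Finset.range (n+1+1),
        ((if (K+1)*(rs.1+rs.2) ≤ n+1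
            then ((T K (d - rs.1 + rs.2) ((n+1) - (K+1)*(rs.1+rs.2))).card : ℤ) else 0)
          - (if (K+1)*(rs.1+rs.2) ≤ n
            then ((T K (d - rs.1 + rs.2) (n - (K+1)*(rs.1+rs.2))).card : ℤ) else 0)) := by
      by_cases hbad : ∃ b ∈ Finset.range (n+1+1) ×ˢ Finset.range (n+1+1),
          (d - b.1 + b.2 = 0) ∧ ((K+1)*(b.1+b.2) = n)
      · obtain ⟨b, hbR, hb1, hb2⟩ := hbad
        have hb00 : 0 < b.1 + b.2 := by
          rcases Nat.eq_zero_or_pos (b.1 + b.2) with h0 | h0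
          · exfalso
            apply h
            have hb10 : b.1 = 0 := by omega
            have hb20 : b.2 = 0 := by omega
            rw [hb10, hb20] at hb1 hb2
            constructor
            · push_cast at hb1; omega
            · simp at hb2; omega
          · exact h0
        set c : ℕ × ℕ := if 0 < b.2 then (b.1, b.2 - 1) else (b.1 - 1, b.2) with hc
        have hcsum : c.1 + c.2 + 1 = b.1 + b.2 := by
          rw [hc]; split <;> simp <;> omega
        have hrel : (K+1)*(b.1+b.2) = (K+1)*(c.1+c.2) + (K+1) := by
          rw [← hcsum]; ring
        have hcR : c ∈ Finset.range (n+1+1) ×ˢ Finset.range (n+1+1) := by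
          simp only [Finset.mem_product, Finset.mem_range] at hbR ⊢
          have : c.1 ≤ b.1 ∧ c.2 ≤ b.2 := by
            rw [hc]; split <;> constructor <;> simp <;> omega
          omega
        have hcb : c ≠ b := by
          intro hcon
          rw [hcon] at hcsum
          omega
        have hdc : d - c.1 + c.2 = 1 ∨ d - c.1 + c.2 = -1 := by
          rw [hc]
          split
          · right; push_cast; push_cast at hb1; omega
          · left
            have hb1pos : 0 < b.1 := by omega
            push_cast; push_cast at hb1; omega
        have hcomp : (1:ℤ) ≤ (if (K+1)*(c.1+c.2) ≤ n+1
              then ((T K (d - c.1 + c.2) ((n+1) - (K+1)*(c.1+c.2))).card : ℤ) else 0)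
            - (if (K+1)*(c.1+c.2) ≤ n
              then ((T K (d - c.1 + c.2) (n - (K+1)*(c.1+c.2))).card : ℤ) else 0) := by
          have hwc : (K+1)*(c.1+c.2) + (K+1) = n := by omega
          rw [if_pos (by omega), if_pos (by omega)]
          rw [show (n+1) - (K+1)*(c.1+c.2) = K + 2 by omega,
              show n - (K+1)*(c.1+c.2) = K + 1 by omega]
          have hQ := Qlem K hK
          rcases hdc with hd1 | hd1 <;> rw [hd1]
          · omega
          · rw [show ((-1 : ℤ)) = -(1:ℤ) by ring, T_symm K (-1) (K+2), T_symm K (-1) (K+1)]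
            simp only [neg_neg]
            omega
        have hfb : (-1:ℤ) ≤ (if (K+1)*(b.1+b.2) ≤ n+1
              then ((T K (d - b.1 + b.2) ((n+1) - (K+1)*(b.1+b.2))).card : ℤ) else 0)
            - (if (K+1)*(b.1+b.2) ≤ n
              then ((T K (d - b.1 + b.2) (n - (K+1)*(b.1+b.2))).card : ℤ) else 0) := by
          rw [if_pos (by omega), if_pos (by omega)]
          rw [show (n+1) - (K+1)*(b.1+b.2) = 1 by omega,
              show n - (K+1)*(b.1+b.2) = 0 by omega, hb1, T_one, T_zero]
          norm_num
        have huniq : ∀ x ∈ (((Finset.range (n+1+1) ×ˢ Finset.range (n+1+1)).erase b).erase c),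
            ¬((d - x.1 + x.2 = 0) ∧ ((K+1)*(x.1+x.2) = n)) := by
          intro x hx
          rintro ⟨h1, h2⟩
          have hxb : x ≠ b := (Finset.mem_erase.mp (Finset.mem_of_mem_erase hx)).1
          apply hxb
          have hs : (K+1)*(x.1+x.2) = (K+1)*(b.1+b.2) := by omega
          have hsum_eq : x.1 + x.2 = b.1 + b.2 :=
            Nat.eq_of_mul_eq_mul_left (by omega) hs
          have hd_eq : (x.1:ℤ) - x.2 = (b.1:ℤ) - b.2 := by omega
          have : x.1 = b.1 ∧ x.2 = b.2 := by omega
          exact Prod.ext this.1 this.2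
        rw [← Finset.add_sum_erase _ _ hbR,
            ← Finset.add_sum_erase _ _ (Finset.mem_erase.mpr ⟨hcb, hcR⟩)]
        have hrest : (0:ℤ) ≤ ∑ rs ∈ (((Finset.range (n+1+1) ×ˢ Finset.range (n+1+1)).erase b).erase c),
            ((if (K+1)*(rs.1+rs.2) ≤ n+1
                then ((T K (d - rs.1 + rs.2) ((n+1) - (K+1)*(rs.1+rs.2))).card : ℤ) else 0)
              - (if (K+1)*(rs.1+rs.2) ≤ n
                then ((T K (d - rs.1 + rs.2) (n - (K+1)*(rs.1+rs.2))).card : ℤ) else 0)) :=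
          Finset.sum_nonneg (fun x hx => hterm x (huniq x hx))
        omega
      · push_neg at hbad
        apply Finset.sum_nonneg
        intro x hx
        apply hterm
        rintro ⟨h1, h2⟩
        exact absurd h2 (hbad x hx h1)
    rw [Finset.sum_sub_distrib] at hsum
    rw [← s1, hpad, ← s0] at hsum
    omega

end F0K

theorem f0k_coeffs (k : ℕ) (hk : 2 ≤ k) :
    fmk k 0 0 = 1 ∧ -1 ≤ fmk k 0 1 ∧ 1 ≤ fmk k 0 2 ∧ ∀ n, 3 ≤ n → 0 ≤ fmk k 0 n := by
  have h0 : akm k 0 0 = 1 := by rw [← F0K.T_card_akm]; exact F0K.T_zero k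
  have h1 : akm k 0 1 = 0 := by rw [← F0K.T_card_akm]; exact F0K.T_one k
  have h2 : akm k 0 2 = 1 := by rw [← F0K.T_card_akm]; exact F0K.T_two k hk
  refine ⟨by simp [fmk, h0], by simp [fmk, h0, h1], by simp [fmk, h1, h2], ?_⟩
  intro n hn
  obtain ⟨m, rfl⟩ : ∃ m, n = m + 1 := ⟨n - 1, by omega⟩
  have := F0K.Pmain k hk 0 m (by omega)
  simp only [fmk, if_neg (by omega : ¬ m + 1 = 0)]
  rw [← F0K.T_card_akm, ← F0K.T_card_akm]
  simp only [Nat.add_sub_cancel]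
  omega
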